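/- Let D be a densely defined closed operator on H with ⟨D⟩² essentially self-adjoint with closure N. Then ‖(1+N)^{-1/2} R_D (1+N)^{-1/2}‖ ≤ 2, where R_D := (i/2)(D² - (D*)²). -/

import Mathlib

open scoped InnerProductSpace
open LinearPMap

/-- Composition `S ∘ T` of partially defined linear operators, with the maximal natural
domain `{x ∈ dom T | T x ∈ dom S}`. -/
noncomputable def LinearPMap.pcomp {H : Type*} [AddCommGroup H] [Module ℂ H]
    (S T : H →ₗ.[ℂ] H) : H →ₗ.[ℂ] H :=
  S.comp (T.domRestrict (Submodule.map T.domain.subtype (Submodule.comap T.toFun S.domain)))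
    (by
      rintro ⟨x, hx⟩
      have hx2 := hx.2
      obtain ⟨⟨y, hy⟩, hy2, (hy3 : y = x)⟩ := hx.1
      subst hy3
      have : T.domRestrict _ ⟨y, hx⟩ = T ⟨y, hy⟩ := domRestrict_apply rfl
      rw [this]
      exact hy2)

/-- The operator `⟨D⟩² = (1/2)(D D* + D* D)` on `dom D D* ∩ dom D* D`. -/
noncomputable def meanSquare {H : Type*} [NormedAddCommGroup H] [InnerProductSpace ℂ H]
    [CompleteSpace H] (D : H →ₗ.[ℂ] H) : H →ₗ.[ℂ] H :=
  ((1 : ℂ) / 2) • (D.pcomp (D†) + (D†).pcomp D)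


set_option linter.unusedSectionVars false
set_option linter.unusedVariables false

section Aux

variable {H : Type*} [AddCommGroup H] [Module ℂ H]

lemma pcomp_mem' (S T : H →ₗ.[ℂ] H) {v : H} (hv : v ∈ (S.pcomp T).domain) :
    ∃ h1 : v ∈ T.domain, T ⟨v, h1⟩ ∈ S.domain := by
  have hx2 : v ∈ T.domain := hv.2
  obtain ⟨⟨y, hy⟩, hy2, (hy3 : y = v)⟩ := hv.1
  subst hy3
  exact ⟨hy, hy2⟩

lemma pcomp_apply' (S T : H →ₗ.[ℂ] H) {v : H} (hv : v ∈ (S.pcomp T).domain)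
    (h1 : v ∈ T.domain) (h2 : T ⟨v, h1⟩ ∈ S.domain) :
    (S.pcomp T) ⟨v, hv⟩ = S ⟨T ⟨v, h1⟩, h2⟩ := by
  show S ⟨T.domRestrict _ ⟨v, hv⟩, _⟩ = _
  have h0 : T.domRestrict _ (⟨v, hv⟩ : ((Submodule.map T.domain.subtype
      (Submodule.comap T.toFun S.domain)) ⊓ T.domain : Submodule ℂ H)) = T ⟨v, h1⟩ :=
    domRestrict_apply rfl
  exact congr_arg S (Subtype.ext h0)

end Aux

section MS

variable {H : Type*} [NormedAddCommGroup H] [InnerProductSpace ℂ H] [CompleteSpace H]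

local notation "⟪" x ", " y "⟫" => @inner ℂ _ _ x y

lemma meanSquare_mem (D : H →ₗ.[ℂ] H) {v : H} (hv : v ∈ (meanSquare D).domain) :
    ∃ (h1 : v ∈ (D†).domain) (h2 : (D†) ⟨v, h1⟩ ∈ D.domain)
      (h3 : v ∈ D.domain) (h4 : D ⟨v, h3⟩ ∈ (D†).domain),
      (meanSquare D) ⟨v, hv⟩ =
        ((1 : ℂ) / 2) • (D ⟨(D†) ⟨v, h1⟩, h2⟩ + (D†) ⟨D ⟨v, h3⟩, h4⟩) := by
  have hvP : v ∈ (D.pcomp (D†)).domain := hv.1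
  have hvQ : v ∈ ((D†).pcomp D).domain := hv.2
  obtain ⟨h1, h2⟩ := pcomp_mem' _ _ hvP
  obtain ⟨h3, h4⟩ := pcomp_mem' _ _ hvQ
  refine ⟨h1, h2, h3, h4, ?_⟩
  have e1 : (meanSquare D) ⟨v, hv⟩ =
      ((1 : ℂ) / 2) • ((D.pcomp (D†) + (D†).pcomp D) ⟨v, hv⟩) := smul_apply _ _ _
  rw [e1, LinearPMap.add_apply, pcomp_apply' _ _ hvP h1 h2, pcomp_apply' _ _ hvQ h3 h4]

end MS

section MS2

variable {H : Type*} [NormedAddCommGroup H] [InnerProductSpace ℂ H] [CompleteSpace H]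

local notation "⟪" x ", " y "⟫" => @inner ℂ _ _ x y

lemma meanSquare_inner_self (D : H →ₗ.[ℂ] H) (hdense : Dense (D.domain : Set H))
    {v : H} (hv : v ∈ (meanSquare D).domain) (h3 : v ∈ D.domain) (h1 : v ∈ (D†).domain) :
    ⟪(meanSquare D) ⟨v, hv⟩, v⟫ =
      (1/2 : ℂ) * (((‖D ⟨v, h3⟩‖ : ℂ))^2 + ((‖(D†) ⟨v, h1⟩‖ : ℂ))^2) := by
  obtain ⟨h1', h2, h3', h4, hval⟩ := meanSquare_mem D hv
  have hadj : (D†).IsFormalAdjoint D := LinearPMap.adjoint_isFormalAdjoint hdense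
  rw [hval, inner_smul_left, inner_add_left]
  rw [hadj.symm ⟨(D†) ⟨v, h1'⟩, h2⟩ ⟨v, h1⟩, hadj ⟨D ⟨v, h3'⟩, h4⟩ ⟨v, h3⟩]
  have e1 : ⟪((⟨(D†) ⟨v, h1'⟩, h2⟩ : D.domain) : H), (D†) ⟨v, h1⟩⟫
      = ((‖(D†) ⟨v, h1⟩‖ : ℂ))^2 := by
    exact inner_self_eq_norm_sq_to_K _
  have e2 : ⟪((⟨D ⟨v, h3'⟩, h4⟩ : (D†).domain) : H), D ⟨v, h3⟩⟫
      = ((‖D ⟨v, h3⟩‖ : ℂ))^2 := by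
    exact inner_self_eq_norm_sq_to_K _
  rw [e1, e2]
  have : (starRingEnd ℂ) (1/2 : ℂ) = 1/2 := by
    norm_num [Complex.ext_iff]
  rw [this]
  ring

end MS2
section MS3

variable {H : Type*} [NormedAddCommGroup H] [InnerProductSpace ℂ H] [CompleteSpace H]

local notation "⟪" x ", " y "⟫" => @inner ℂ _ _ x y

lemma meanSquare_re_inner_self (D : H →ₗ.[ℂ] H) (hdense : Dense (D.domain : Set H))
    {v : H} (hv : v ∈ (meanSquare D).domain) (h3 : v ∈ D.domain) (h1 : v ∈ (D†).domain) :
    ‖D ⟨v, h3⟩‖ ^ 2 + ‖(D†) ⟨v, h1⟩‖ ^ 2 = 2 * (⟪(meanSquare D) ⟨v, hv⟩, v⟫).re := by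
  rw [meanSquare_inner_self D hdense hv h3 h1]
  rw [show (1/2 : ℂ) = ((1/2 : ℝ) : ℂ) by norm_num, ← Complex.ofReal_pow, ← Complex.ofReal_pow,
    ← Complex.ofReal_add, ← Complex.ofReal_mul, Complex.ofReal_re]
  ring

end MS3
section MS4

open Filter

variable {H : Type*} [NormedAddCommGroup H] [InnerProductSpace ℂ H] [CompleteSpace H]

local notation "⟪" x ", " y "⟫" => @inner ℂ _ _ x y

lemma closure_bound (D : H →ₗ.[ℂ] H) (hdense : Dense (D.domain : Set H)) (hclosed : D.IsClosed)
    {v : H} (hv : v ∈ (meanSquare D).closure.domain) :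
    ∃ (hD : v ∈ D.domain) (hD' : v ∈ (D†).domain),
      ‖D ⟨v, hD⟩‖ ^ 2 + ‖(D†) ⟨v, hD'⟩‖ ^ 2 ≤
        2 * (⟪(meanSquare D).closure ⟨v, hv⟩, v⟫).re := by
  by_cases hc : (meanSquare D).IsClosable
  case neg =>
    have e := LinearPMap.closure_def' hc
    revert hv
    rw [e]
    intro hv
    obtain ⟨hh1, hh2, hh3, hh4, _⟩ := meanSquare_mem D hv
    exact ⟨hh3, hh1, le_of_eq (meanSquare_re_inner_self D hdense hv hh3 hh1)⟩
  case pos =>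
    have hgraph : (meanSquare D).closure.graph = (meanSquare D).graph.topologicalClosure :=
      hc.graph_closure_eq_closure_graph.symm
    set T := meanSquare D with hT
    set N := T.closure with hN
    have hmem : ((v : H), N ⟨v, hv⟩) ∈ N.graph := N.mem_graph ⟨v, hv⟩
    rw [hgraph] at hmem
    have hmem' : ((v : H), N ⟨v, hv⟩) ∈ closure (T.graph : Set (H × H)) := by
      rwa [← SetLike.mem_coe, Submodule.topologicalClosure_coe] at hmem
    obtain ⟨p, hp, hptend⟩ := mem_closure_iff_seq_limit.mp hmem'
    have hsel : ∀ n, ∃ y : T.domain, ((y : H), T y) = p n := fun n =>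
      (LinearPMap.mem_graph_iff' T).mp (hp n)
    choose a ha using hsel
    have hav : Tendsto (fun n => ((a n : H))) atTop (nhds v) := by
      have h1 : Tendsto (fun n => (p n).1) atTop (nhds v) :=
        (continuous_fst.tendsto _).comp hptend
      have h2 : (fun n => ((a n : H))) = fun n => (p n).1 :=
        funext fun n => by rw [← ha n]
      rwa [h2]
    have hTa : Tendsto (fun n => T (a n)) atTop (nhds (N ⟨v, hv⟩)) := by
      have h1 : Tendsto (fun n => (p n).2) atTop (nhds (N ⟨v, hv⟩)) :=
        (continuous_snd.tendsto _).comp hptend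
      have h2 : (fun n => T (a n)) = fun n => (p n).2 :=
        funext fun n => by rw [← ha n]
      rwa [h2]
    choose hd1 hd2 hd3 hd4 hval using fun n => meanSquare_mem D (a n).2
    set b : ℕ → H := fun n => D ⟨(a n : H), hd3 n⟩ with hb
    set c : ℕ → H := fun n => (D†) ⟨(a n : H), hd1 n⟩ with hc2
    -- the key Cauchy difference bound
    have hkey : ∀ n m : ℕ, ‖b n - b m‖ ^ 2 + ‖c n - c m‖ ^ 2 ≤
        2 * ‖T (a n) - T (a m)‖ * ‖(a n : H) - (a m : H)‖ := by
      intro n m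
      have hsub3 : ((a n : H)) - (a m : H) ∈ D.domain := sub_mem (hd3 n) (hd3 m)
      have hsub1 : ((a n : H)) - (a m : H) ∈ (D†).domain := sub_mem (hd1 n) (hd1 m)
      have e3 : D ⟨(a n : H) - (a m : H), hsub3⟩ = b n - b m := by
        have : (⟨(a n : H) - (a m : H), hsub3⟩ : D.domain)
            = ⟨(a n : H), hd3 n⟩ - ⟨(a m : H), hd3 m⟩ := rfl
        rw [this, D.map_sub]
      have e1 : (D†) ⟨(a n : H) - (a m : H), hsub1⟩ = c n - c m := by
        have : (⟨(a n : H) - (a m : H), hsub1⟩ : (D†).domain)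
            = ⟨(a n : H), hd1 n⟩ - ⟨(a m : H), hd1 m⟩ := rfl
        rw [this, (D†).map_sub]
      have hsubT : ((a n : H)) - (a m : H) ∈ T.domain := sub_mem (a n).2 (a m).2
      have hq := meanSquare_re_inner_self D hdense (v := ((a n : H)) - (a m : H))
        hsubT hsub3 hsub1
      rw [e3, e1] at hq
      rw [hq]
      have eT : T ⟨(a n : H) - (a m : H), hsubT⟩ = T (a n) - T (a m) := by
        have : (⟨(a n : H) - (a m : H), hsubT⟩ : T.domain) = a n - a m := rfl
        rw [this, T.map_sub]
      calc 2 * (⟪T ⟨(a n : H) - (a m : H), hsubT⟩, (a n : H) - (a m : H)⟫).re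
          ≤ 2 * (‖T ⟨(a n : H) - (a m : H), hsubT⟩‖ * ‖(a n : H) - (a m : H)‖) := by
            have := re_inner_le_norm (𝕜 := ℂ)
              (T ⟨(a n : H) - (a m : H), hsubT⟩) ((a n : H) - (a m : H))
            simp only [RCLike.re_to_complex] at this
            linarith
        _ = 2 * ‖T (a n) - T (a m)‖ * ‖(a n : H) - (a m : H)‖ := by
            rw [eT]; ring
    -- Cauchy criterion helper
    have hcauchy : ∀ f : ℕ → H, (∀ n m : ℕ, ‖f n - f m‖ ^ 2 ≤
        2 * ‖T (a n) - T (a m)‖ * ‖(a n : H) - (a m : H)‖) → CauchySeq f := by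
      intro f hf
      obtain ⟨R, hR0, hR⟩ := cauchySeq_bdd hTa.cauchySeq
      rw [Metric.cauchySeq_iff]
      intro ε hε
      have hδ : 0 < ε ^ 2 / (2 * R) := by positivity
      obtain ⟨N₀, hN₀⟩ := Metric.cauchySeq_iff.mp hav.cauchySeq _ hδ
      refine ⟨N₀, fun n hn m hm => ?_⟩
      have h1 := hf n m
      have h2 : dist (T (a n)) (T (a m)) < R := hR n m
      have h3 : dist ((a n : H)) ((a m : H)) < ε ^ 2 / (2 * R) := hN₀ n hn m hm
      rw [dist_eq_norm] at h2 h3 ⊢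
      have hnn1 : (0:ℝ) ≤ ‖(a n : H) - (a m : H)‖ := norm_nonneg _
      have hnn2 : (0:ℝ) ≤ ‖T (a n) - T (a m)‖ := norm_nonneg _
      have h5 : 2 * ‖T (a n) - T (a m)‖ * ‖(a n : H) - (a m : H)‖
          ≤ 2 * R * ‖(a n : H) - (a m : H)‖ := by nlinarith
      have h6 : 2 * R * ‖(a n : H) - (a m : H)‖ < 2 * R * (ε ^ 2 / (2 * R)) := by
        apply mul_lt_mul_of_pos_left h3
        positivity
      have h7 : 2 * R * (ε ^ 2 / (2 * R)) = ε ^ 2 := by field_simp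
      have h4 : ‖f n - f m‖ ^ 2 < ε ^ 2 := by linarith
      nlinarith [norm_nonneg (f n - f m)]
    have hbC : CauchySeq b := hcauchy b fun n m => by
      linarith [hkey n m, sq_nonneg ‖c n - c m‖]
    have hcC : CauchySeq c := hcauchy c fun n m => by
      linarith [hkey n m, sq_nonneg ‖b n - b m‖]
    obtain ⟨l, hl⟩ := cauchySeq_tendsto_of_complete hbC
    obtain ⟨w, hw⟩ := cauchySeq_tendsto_of_complete hcC
    -- identify the limit of b using closedness of D
    have hgb : ∀ n, ((a n : H), b n) ∈ D.graph := fun n => D.mem_graph ⟨(a n : H), hd3 n⟩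
    have hlim : Tendsto (fun n => (((a n : H)), b n)) atTop (nhds (v, l)) := hav.prodMk_nhds hl
    have hvg : (v, l) ∈ D.graph := hclosed.mem_of_tendsto hlim (Filter.Eventually.of_forall hgb)
    obtain ⟨y, hy1, hy2⟩ := D.mem_graph_iff.mp hvg
    have hy1' : (y : H) = v := hy1
    have hy2' : D y = l := hy2
    have hDv : v ∈ D.domain := hy1' ▸ y.2
    have hDvl : D ⟨v, hDv⟩ = l := by
      rw [← hy2']
      exact congr_arg (⇑D) (Subtype.ext hy1'.symm)
    -- identify the limit of c using the adjoint relation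
    have hadj : (D†).IsFormalAdjoint D := LinearPMap.adjoint_isFormalAdjoint hdense
    have hmm : ∀ x : D.domain, ⟪w, (x : H)⟫ = ⟪v, D x⟫ := by
      intro x
      have t1 : Tendsto (fun n => (⟪c n, (x : H)⟫ : ℂ)) atTop (nhds ⟪w, (x : H)⟫) :=
        hw.inner tendsto_const_nhds
      have t2 : (fun n => (⟪c n, (x : H)⟫ : ℂ)) = fun n => ⟪(a n : H), D x⟫ :=
        funext fun n => hadj ⟨(a n : H), hd1 n⟩ x
      have t3 : Tendsto (fun n => (⟪(a n : H), D x⟫ : ℂ)) atTop (nhds ⟪v, D x⟫) :=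
        hav.inner tendsto_const_nhds
      rw [t2] at t1
      exact tendsto_nhds_unique t1 t3
    have hDv' : v ∈ (D†).domain := LinearPMap.mem_adjoint_domain_of_exists (T := D) v ⟨w, hmm⟩
    have hDvw : (D†) ⟨v, hDv'⟩ = w := LinearPMap.adjoint_apply_eq hdense ⟨v, hDv'⟩ hmm
    refine ⟨hDv, hDv', ?_⟩
    have hn : ∀ n, ‖b n‖ ^ 2 + ‖c n‖ ^ 2 = 2 * (⟪T (a n), (a n : H)⟫).re := fun n =>
      meanSquare_re_inner_self D hdense (a n).2 (hd3 n) (hd1 n)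
    have L1 : Tendsto (fun n => ‖b n‖ ^ 2 + ‖c n‖ ^ 2) atTop (nhds (‖l‖ ^ 2 + ‖w‖ ^ 2)) :=
      (hl.norm.pow 2).add (hw.norm.pow 2)
    have L2 : Tendsto (fun n => 2 * (⟪T (a n), (a n : H)⟫).re) atTop
        (nhds (2 * (⟪N ⟨v, hv⟩, v⟫).re)) := by
      have t0 := Filter.Tendsto.inner (𝕜 := ℂ) hTa hav
      have t1 := (Complex.continuous_re.tendsto _).comp t0
      exact t1.const_mul 2
    have heq : ‖l‖ ^ 2 + ‖w‖ ^ 2 = 2 * (⟪N ⟨v, hv⟩, v⟫).re := by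
      apply tendsto_nhds_unique _ L2
      rw [show (fun n => 2 * (⟪T (a n), (a n : H)⟫).re)
        = fun n => ‖b n‖ ^ 2 + ‖c n‖ ^ 2 from funext fun n => (hn n).symm]
      exact L1
    rw [hDvl, hDvw, heq]
end MS4
section MS5

open Filter

variable {H : Type*} [NormedAddCommGroup H] [InnerProductSpace ℂ H] [CompleteSpace H]

local notation "⟪" x ", " y "⟫" => @inner ℂ _ _ x y

lemma sq_bound (D : H →ₗ.[ℂ] H) (hdense : Dense (D.domain : Set H)) (hclosed : D.IsClosed)
    (B : H →L[ℂ] H) (hBsa : IsSelfAdjoint B)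
    (hBmem : ∀ x : H, B (B x) ∈ (meanSquare D).closure.domain)
    (hB2 : ∀ x : H, B (B x) + (meanSquare D).closure ⟨B (B x), hBmem x⟩ = x) (y : H) :
    ∃ (hD : B (B y) ∈ D.domain) (hD' : B (B y) ∈ (D†).domain),
      ‖D ⟨B (B y), hD⟩‖ ^ 2 + ‖(D†) ⟨B (B y), hD'⟩‖ ^ 2 ≤ 2 * ‖B y‖ ^ 2 := by
  have hadjB : ContinuousLinearMap.adjoint B = B := by
    rw [← ContinuousLinearMap.star_eq_adjoint]; exact hBsa
  have hsym : ∀ a b : H, ⟪B a, b⟫ = ⟪a, B b⟫ := by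
    intro a b
    rw [← hadjB, ContinuousLinearMap.adjoint_inner_left, hadjB]
  obtain ⟨hD, hD', hq⟩ := closure_bound D hdense hclosed (hBmem y)
  refine ⟨hD, hD', hq.trans ?_⟩
  have hNv : (meanSquare D).closure ⟨B (B y), hBmem y⟩ = y - B (B y) :=
    eq_sub_of_add_eq' (hB2 y)
  rw [hNv]
  have e : (⟪y - B (B y), B (B y)⟫ : ℂ).re = ‖B y‖ ^ 2 - ‖B (B y)‖ ^ 2 := by
    rw [inner_sub_left, ← hsym y (B y), inner_self_eq_norm_sq_to_K, inner_self_eq_norm_sq_to_K]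
    simp
    norm_cast
  rw [e]
  nlinarith [sq_nonneg ‖B (B y)‖]

lemma cauchy_of_sq_bound (g h : ℕ → H) (hg : CauchySeq g)
    (hb : ∀ n m, ‖h n - h m‖ ^ 2 ≤ 2 * ‖g n - g m‖ ^ 2) : CauchySeq h := by
  rw [Metric.cauchySeq_iff] at *
  intro ε hε
  obtain ⟨N₀, hN₀⟩ := hg (ε / 2) (by positivity)
  refine ⟨N₀, fun n hn m hm => ?_⟩
  have h1 := hb n m
  have h2 := hN₀ n hn m hm
  rw [dist_eq_norm] at h2 ⊢
  nlinarith [norm_nonneg (h n - h m), norm_nonneg (g n - g m)]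

lemma limit_lemma (D : H →ₗ.[ℂ] H) (hdense : Dense (D.domain : Set H)) (hclosed : D.IsClosed)
    (v : ℕ → H) (hD : ∀ n, v n ∈ D.domain) (hD' : ∀ n, v n ∈ (D†).domain)
    {u : H} (hu : Tendsto v atTop (nhds u))
    (hCb : CauchySeq (fun n => D ⟨v n, hD n⟩))
    (hCc : CauchySeq (fun n => (D†) ⟨v n, hD' n⟩)) :
    ∃ (h1 : u ∈ D.domain) (h2 : u ∈ (D†).domain),
      Tendsto (fun n => D ⟨v n, hD n⟩) atTop (nhds (D ⟨u, h1⟩)) ∧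
      Tendsto (fun n => (D†) ⟨v n, hD' n⟩) atTop (nhds ((D†) ⟨u, h2⟩)) := by
  obtain ⟨l, hl⟩ := cauchySeq_tendsto_of_complete hCb
  obtain ⟨w, hw⟩ := cauchySeq_tendsto_of_complete hCc
  have hgb : ∀ n, (v n, D ⟨v n, hD n⟩) ∈ D.graph := fun n => D.mem_graph ⟨v n, hD n⟩
  have hlim : Tendsto (fun n => (v n, D ⟨v n, hD n⟩)) atTop (nhds (u, l)) := hu.prodMk_nhds hl
  have hvg : (u, l) ∈ D.graph := hclosed.mem_of_tendsto hlim (Filter.Eventually.of_forall hgb)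
  obtain ⟨y, hy1, hy2⟩ := D.mem_graph_iff.mp hvg
  have hy1' : (y : H) = u := hy1
  have hy2' : D y = l := hy2
  have hDu : u ∈ D.domain := hy1' ▸ y.2
  have hDul : D ⟨u, hDu⟩ = l := by
    rw [← hy2']
    exact congr_arg (⇑D) (Subtype.ext hy1'.symm)
  have hadj : (D†).IsFormalAdjoint D := LinearPMap.adjoint_isFormalAdjoint hdense
  have hmm : ∀ x : D.domain, ⟪w, (x : H)⟫ = ⟪u, D x⟫ := by
    intro x
    have t1 : Tendsto (fun n => (⟪(D†) ⟨v n, hD' n⟩, (x : H)⟫ : ℂ)) atTop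
        (nhds ⟪w, (x : H)⟫) := hw.inner tendsto_const_nhds
    have t2 : (fun n => (⟪(D†) ⟨v n, hD' n⟩, (x : H)⟫ : ℂ)) = fun n => ⟪v n, D x⟫ :=
      funext fun n => hadj ⟨v n, hD' n⟩ x
    have t3 : Tendsto (fun n => (⟪v n, D x⟫ : ℂ)) atTop (nhds ⟪u, D x⟫) :=
      hu.inner tendsto_const_nhds
    rw [t2] at t1
    exact tendsto_nhds_unique t1 t3
  have hDu' : u ∈ (D†).domain := LinearPMap.mem_adjoint_domain_of_exists (T := D) u ⟨w, hmm⟩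
  have hDuw : (D†) ⟨u, hDu'⟩ = w := LinearPMap.adjoint_apply_eq hdense ⟨u, hDu'⟩ hmm
  exact ⟨hDu, hDu', by rwa [hDul], by rwa [hDuw]⟩

end MS5

open Filter

/-- Let `D` be a densely defined closed operator on `H` with `⟨D⟩²`
essentially self-adjoint with closure `N`.  With `B = (1+N)^{-1/2}` (the positive self-adjoint
bounded operator with `B² = (1+N)^{-1}`), the operator `(1+N)^{-1/2} R_D (1+N)^{-1/2}`,
where `R_D := (i/2)(D² - (D*)²)`, is bounded with norm at most `2` (on the set of vectors
where it is defined, hence it extends to a bounded operator of norm at most `2`). -/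
theorem norm_resolvent_RD_resolvent_le_two
    {H : Type*} [NormedAddCommGroup H] [InnerProductSpace ℂ H] [CompleteSpace H]
    (D : H →ₗ.[ℂ] H) (hdense : Dense (D.domain : Set H)) (hclosed : D.IsClosed)
    (hdense2 : Dense (((meanSquare D).domain : Submodule ℂ H) : Set H))
    (hess : IsSelfAdjoint (meanSquare D).closure)
    (B : H →L[ℂ] H) (hBsa : IsSelfAdjoint B)
    (hBpos : ∀ x : H, 0 ≤ (⟪B x, x⟫_ℂ).re)
    (hBmem : ∀ x : H, B (B x) ∈ (meanSquare D).closure.domain)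
    (hB2 : ∀ x : H, B (B x) + (meanSquare D).closure ⟨B (B x), hBmem x⟩ = x) :
    ∀ (x : H) (h1 : B x ∈ D.domain) (h2 : D ⟨B x, h1⟩ ∈ D.domain)
      (h3 : B x ∈ (D†).domain) (h4 : (D†) ⟨B x, h3⟩ ∈ (D†).domain),
      ‖B ((Complex.I / 2) •
          (D ⟨D ⟨B x, h1⟩, h2⟩ - (D†) ⟨(D†) ⟨B x, h3⟩, h4⟩))‖ ≤ 2 * ‖x‖ := by
  intro x h1 h2 h3 h4
  have hadjB : ContinuousLinearMap.adjoint B = B := by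
    rw [← ContinuousLinearMap.star_eq_adjoint]; exact hBsa
  have hsym : ∀ a b : H, ⟪B a, b⟫_ℂ = ⟪a, B b⟫_ℂ := fun a b => by
    rw [← hadjB, ContinuousLinearMap.adjoint_inner_left, hadjB]
  -- injectivity of B
  have hinj : ∀ t : H, B t = 0 → t = 0 := by
    intro t ht
    have e0 : B (B t) = 0 := by rw [ht]; exact _root_.map_zero B
    have h := hB2 t
    have h00 : (⟨B (B t), hBmem t⟩ : (meanSquare D).closure.domain) = 0 :=
      Subtype.ext (by simp [e0])
    have eN : (meanSquare D).closure ⟨B (B t), hBmem t⟩ = 0 := by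
      rw [h00]; exact LinearPMap.map_zero _
    rw [eN, e0] at h
    simpa using h.symm
  -- density of the range of B
  have hKdense : Dense ((LinearMap.range (B : H →ₗ[ℂ] H) : Submodule ℂ H) : Set H) := by
    rw [Submodule.dense_iff_topologicalClosure_eq_top, Submodule.topologicalClosure_eq_top_iff,
      Submodule.eq_bot_iff]
    intro t ht
    have h0 : (⟪B t, B t⟫_ℂ) = 0 := by
      have := (Submodule.mem_orthogonal _ t).mp ht (B (B t)) ⟨B t, rfl⟩
      rwa [hsym (B t) t] at this
    exact hinj t (inner_self_eq_zero.mp h0)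
  obtain ⟨q, hqmem, hqt⟩ := mem_closure_iff_seq_limit.mp (hKdense x)
  have hzex : ∀ n, ∃ zz : H, B zz = q n := fun n => LinearMap.mem_range.mp (hqmem n)
  choose z hzq using hzex
  have hzx : Tendsto (fun n => B (z n)) atTop (nhds x) := by
    rw [show (fun n => B (z n)) = q from funext hzq]; exact hqt
  -- quadratic form bound for u = B x
  choose hD hD' hbound using fun n => sq_bound D hdense hclosed B hBsa hBmem hB2 (z n)
  set v : ℕ → H := fun n => B (B (z n)) with hv
  have hdiff : ∀ n m : ℕ, ‖D ⟨v n, hD n⟩ - D ⟨v m, hD m⟩‖ ^ 2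
      + ‖(D†) ⟨v n, hD' n⟩ - (D†) ⟨v m, hD' m⟩‖ ^ 2 ≤ 2 * ‖B (z n) - B (z m)‖ ^ 2 := by
    intro n m
    obtain ⟨hd, hd', hbnd⟩ := sq_bound D hdense hclosed B hBsa hBmem hB2 (z n - z m)
    have e : B (B (z n - z m)) = v n - v m := by simp [hv, _root_.map_sub]
    have hsub3 : v n - v m ∈ D.domain := e ▸ hd
    have hsub1 : v n - v m ∈ (D†).domain := e ▸ hd'
    have e3 : D ⟨B (B (z n - z m)), hd⟩ = D ⟨v n, hD n⟩ - D ⟨v m, hD m⟩ := by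
      rw [congr_arg (⇑D) (Subtype.ext e :
        (⟨B (B (z n - z m)), hd⟩ : D.domain) = ⟨v n - v m, hsub3⟩)]
      rw [show (⟨v n - v m, hsub3⟩ : D.domain) = ⟨v n, hD n⟩ - ⟨v m, hD m⟩ from rfl, LinearPMap.map_sub]
    have e1 : (D†) ⟨B (B (z n - z m)), hd'⟩ = (D†) ⟨v n, hD' n⟩ - (D†) ⟨v m, hD' m⟩ := by
      rw [congr_arg (⇑(D†)) (Subtype.ext e :
        (⟨B (B (z n - z m)), hd'⟩ : (D†).domain) = ⟨v n - v m, hsub1⟩)]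
      rw [show (⟨v n - v m, hsub1⟩ : (D†).domain) = ⟨v n, hD' n⟩ - ⟨v m, hD' m⟩ from rfl,
        LinearPMap.map_sub]
    have e2 : ‖B (z n - z m)‖ = ‖B (z n) - B (z m)‖ := by rw [_root_.map_sub]
    rw [e3, e1, e2] at hbnd
    exact hbnd
  have hCb : CauchySeq (fun n => D ⟨v n, hD n⟩) :=
    cauchy_of_sq_bound (fun n => B (z n)) _ hzx.cauchySeq
      (fun n m => by linarith [hdiff n m, sq_nonneg ‖(D†) ⟨v n, hD' n⟩ - (D†) ⟨v m, hD' m⟩‖])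
  have hCc : CauchySeq (fun n => (D†) ⟨v n, hD' n⟩) :=
    cauchy_of_sq_bound (fun n => B (z n)) _ hzx.cauchySeq
      (fun n m => by linarith [hdiff n m, sq_nonneg ‖D ⟨v n, hD n⟩ - D ⟨v m, hD m⟩‖])
  have hvu : Tendsto v atTop (nhds (B x)) := (B.continuous.tendsto x).comp hzx
  obtain ⟨h1', h3', hTb, hTc⟩ := limit_lemma D hdense hclosed v hD hD' hvu hCb hCc
  have hq_u : ‖D ⟨B x, h1⟩‖ ^ 2 + ‖(D†) ⟨B x, h3⟩‖ ^ 2 ≤ 2 * ‖x‖ ^ 2 := by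
    have L1 := (hTb.norm.pow 2).add (hTc.norm.pow 2)
    have L2 : Tendsto (fun n => 2 * ‖B (z n)‖ ^ 2) atTop (nhds (2 * ‖x‖ ^ 2)) :=
      (hzx.norm.pow 2).const_mul 2
    exact le_of_tendsto_of_tendsto' L1 L2 hbound
  -- step 2 and 3
  set w : H := (Complex.I / 2) • (D ⟨D ⟨B x, h1⟩, h2⟩ - (D†) ⟨(D†) ⟨B x, h3⟩, h4⟩) with hwdef
  obtain ⟨hD2, hD2', hq_v⟩ := sq_bound D hdense hclosed B hBsa hBmem hB2 w
  have hBw2 : ‖B w‖ ^ 2 = (⟪w, B (B w)⟫_ℂ).re := by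
    rw [← hsym w (B w), inner_self_eq_norm_sq_to_K]
    norm_cast
  have hadj : (D†).IsFormalAdjoint D := LinearPMap.adjoint_isFormalAdjoint hdense
  have e1 : (⟪D ⟨D ⟨B x, h1⟩, h2⟩, B (B w)⟫_ℂ) = ⟪D ⟨B x, h1⟩, (D†) ⟨B (B w), hD2'⟩⟫_ℂ :=
    hadj.symm ⟨D ⟨B x, h1⟩, h2⟩ ⟨B (B w), hD2'⟩
  have e2 : (⟪(D†) ⟨(D†) ⟨B x, h3⟩, h4⟩, B (B w)⟫_ℂ) = ⟪(D†) ⟨B x, h3⟩, D ⟨B (B w), hD2⟩⟫_ℂ :=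
    hadj ⟨(D†) ⟨B x, h3⟩, h4⟩ ⟨B (B w), hD2⟩
  have hsplit : (⟪w, B (B w)⟫_ℂ) = (starRingEnd ℂ) (Complex.I / 2) *
      ((⟪D ⟨D ⟨B x, h1⟩, h2⟩, B (B w)⟫_ℂ) - ⟪(D†) ⟨(D†) ⟨B x, h3⟩, h4⟩, B (B w)⟫_ℂ) := by
    nth_rewrite 1 [hwdef]
    rw [inner_smul_left, inner_sub_left]
  rw [e1, e2] at hsplit
  have habs : ‖(⟪w, B (B w)⟫_ℂ)‖ ≤ (1/2) * (‖D ⟨B x, h1⟩‖ * ‖(D†) ⟨B (B w), hD2'⟩‖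
      + ‖(D†) ⟨B x, h3⟩‖ * ‖D ⟨B (B w), hD2⟩‖) := by
    rw [hsplit, norm_mul]
    have hc : ‖(starRingEnd ℂ) (Complex.I / 2)‖ = 1/2 := by
      rw [RCLike.norm_conj, norm_div]
      simp
    rw [hc]
    have hn1 := norm_inner_le_norm (𝕜 := ℂ) (D ⟨B x, h1⟩) ((D†) ⟨B (B w), hD2'⟩)
    have hn2 := norm_inner_le_norm (𝕜 := ℂ) ((D†) ⟨B x, h3⟩) (D ⟨B (B w), hD2⟩)
    have hns := norm_sub_le (⟪D ⟨B x, h1⟩, (D†) ⟨B (B w), hD2'⟩⟫_ℂ)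
      (⟪(D†) ⟨B x, h3⟩, D ⟨B (B w), hD2⟩⟫_ℂ)
    linarith
  have hre : ‖B w‖ ^ 2 ≤ ‖(⟪w, B (B w)⟫_ℂ)‖ := by
    rw [hBw2]
    exact Complex.re_le_norm _
  have hY2 : ‖B w‖ ^ 2 ≤ ‖x‖ ^ 2 := by
    nlinarith [sq_nonneg (‖D ⟨B x, h1⟩‖ - ‖(D†) ⟨B (B w), hD2'⟩‖),
      sq_nonneg (‖(D†) ⟨B x, h3⟩‖ - ‖D ⟨B (B w), hD2⟩‖), hq_u, hq_v, habs, hre]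
  have hfin : ‖B w‖ ≤ ‖x‖ := by
    nlinarith [norm_nonneg (B w), norm_nonneg x, hY2]
  linarith [norm_nonneg x]
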